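/- Let k₁ > k₂ > 0, let b₁, b₂, ψ₁ ∈ ℝ, set H = (k₁ − k₂)/(k₁ + k₂), and define ξᵢ(y) = kᵢ·y + bᵢ for i = 1, 2. Then for all y ∈ ℝ, Wr₃( 1 + H⁴·e^{2ξ₁ − ψ₁}, e^{ξ₁}, e^{ξ₁ − ξ₂} )(y) = −k₁·k₂·e^{2ξ₁(y) − ξ₂(y)}·[ (k₁ + k₂)·H⁴·e^{2ξ₁(y) − ψ₁} + (k₁ − k₂) ]. -/
import Mathlib

private lemma deriv_cma (B A a c : ℝ) (f : ℝ → ℝ)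
    (hf : ∀ y, f y = B + A * Real.exp (a * y + c)) :
    deriv f = fun y => (A * a) * Real.exp (a * y + c) := by
  have hf' : f = fun y => B + A * Real.exp (a * y + c) := funext hf
  funext y
  have h : HasDerivAt (fun y => B + A * Real.exp (a * y + c))
      (A * a * Real.exp (a * y + c)) y := by
    have := ((((hasDerivAt_id y).const_mul a).add_const c).exp.const_mul A).const_add B
    simpa [mul_comm, mul_assoc, mul_left_comm] using this
  rw [hf']; exact h.deriv

set_option maxHeartbeats 1000000 in
/-- explicit evaluation of the third-order Wronskian `Ĵ₂`
appearing in the count of negative eigenvalues of the Hessian. -/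
theorem wronskian_J2hat (k₁ k₂ b₁ b₂ ψ₁ H : ℝ)
    (hk₂ : 0 < k₂) (hk : k₂ < k₁)
    (hH : H = (k₁ - k₂) / (k₁ + k₂))
    (ξ₁ ξ₂ : ℝ → ℝ)
    (hξ₁ : ∀ y, ξ₁ y = k₁ * y + b₁) (hξ₂ : ∀ y, ξ₂ y = k₂ * y + b₂)
    (f₁ f₂ f₃ : ℝ → ℝ)
    (hf₁ : ∀ y, f₁ y = 1 + H ^ 4 * Real.exp (2 * ξ₁ y - ψ₁))
    (hf₂ : ∀ y, f₂ y = Real.exp (ξ₁ y))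
    (hf₃ : ∀ y, f₃ y = Real.exp (ξ₁ y - ξ₂ y)) :
    ∀ y : ℝ,
      Matrix.det !![f₁ y, f₂ y, f₃ y;
                    deriv f₁ y, deriv f₂ y, deriv f₃ y;
                    deriv (deriv f₁) y, deriv (deriv f₂) y, deriv (deriv f₃) y]
        = -(k₁ * k₂) * Real.exp (2 * ξ₁ y - ξ₂ y)
            * ((k₁ + k₂) * H ^ 4 * Real.exp (2 * ξ₁ y - ψ₁) + (k₁ - k₂)) := by
  have hF1 : ∀ y, f₁ y = 1 + H ^ 4 * Real.exp (2 * k₁ * y + (2 * b₁ - ψ₁)) := by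
    intro y
    rw [hf₁ y, hξ₁ y, show 2 * (k₁ * y + b₁) - ψ₁ = 2 * k₁ * y + (2 * b₁ - ψ₁) from by ring]
  have hF2 : ∀ y, f₂ y = 0 + 1 * Real.exp (k₁ * y + b₁) := by
    intro y; rw [hf₂ y, hξ₁ y]; ring
  have hF3 : ∀ y, f₃ y = 0 + 1 * Real.exp ((k₁ - k₂) * y + (b₁ - b₂)) := by
    intro y
    rw [hf₃ y, hξ₁ y, hξ₂ y,
      show k₁ * y + b₁ - (k₂ * y + b₂) = (k₁ - k₂) * y + (b₁ - b₂) from by ring]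
    ring
  have d1 := deriv_cma 1 (H ^ 4) (2 * k₁) (2 * b₁ - ψ₁) f₁ hF1
  have d1' := deriv_cma 0 (H ^ 4 * (2 * k₁)) (2 * k₁) (2 * b₁ - ψ₁) (deriv f₁)
    (fun y => by rw [d1]; ring)
  have d2 := deriv_cma 0 1 k₁ b₁ f₂ hF2
  have d2' := deriv_cma 0 (1 * k₁) k₁ b₁ (deriv f₂) (fun y => by rw [d2]; ring)
  have d3 := deriv_cma 0 1 (k₁ - k₂) (b₁ - b₂) f₃ hF3
  have d3' := deriv_cma 0 (1 * (k₁ - k₂)) (k₁ - k₂) (b₁ - b₂) (deriv f₃)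
    (fun y => by rw [d3]; ring)
  intro y
  have E1 : Real.exp (2 * k₁ * y + (2 * b₁ - ψ₁))
      = Real.exp (k₁ * y + b₁) * Real.exp (k₁ * y + b₁) * Real.exp (-ψ₁) := by
    rw [← Real.exp_add, ← Real.exp_add]; congr 1; ring
  have E3 : Real.exp ((k₁ - k₂) * y + (b₁ - b₂))
      = Real.exp (k₁ * y + b₁) * Real.exp (-(k₂ * y + b₂)) := by
    rw [← Real.exp_add]; congr 1; ring
  have E4 : Real.exp (2 * ξ₁ y - ξ₂ y)
      = Real.exp (k₁ * y + b₁) * Real.exp (k₁ * y + b₁) * Real.exp (-(k₂ * y + b₂)) := by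
    rw [hξ₁ y, hξ₂ y, ← Real.exp_add, ← Real.exp_add]; congr 1; ring
  have E5 : Real.exp (2 * ξ₁ y - ψ₁)
      = Real.exp (k₁ * y + b₁) * Real.exp (k₁ * y + b₁) * Real.exp (-ψ₁) := by
    rw [hξ₁ y, ← Real.exp_add, ← Real.exp_add]; congr 1; ring
  have A1 : deriv f₁ y = H ^ 4 * (2 * k₁) * Real.exp (2 * k₁ * y + (2 * b₁ - ψ₁)) := by rw [d1]
  have A1' : deriv (deriv f₁) y
      = H ^ 4 * (2 * k₁) * (2 * k₁) * Real.exp (2 * k₁ * y + (2 * b₁ - ψ₁)) := by rw [d1']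
  have A2 : deriv f₂ y = 1 * k₁ * Real.exp (k₁ * y + b₁) := by rw [d2]
  have A2' : deriv (deriv f₂) y = 1 * k₁ * k₁ * Real.exp (k₁ * y + b₁) := by rw [d2']
  have A3 : deriv f₃ y = 1 * (k₁ - k₂) * Real.exp ((k₁ - k₂) * y + (b₁ - b₂)) := by rw [d3]
  have A3' : deriv (deriv f₃) y
      = 1 * (k₁ - k₂) * (k₁ - k₂) * Real.exp ((k₁ - k₂) * y + (b₁ - b₂)) := by rw [d3']
  rw [Matrix.det_fin_three, hF1 y, hF2 y, hF3 y, A1', A1, A2', A2, A3', A3]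
  simp only [Matrix.of_apply, Matrix.cons_val', Matrix.cons_val_zero, Matrix.cons_val_one,
    Matrix.head_cons, Matrix.empty_val', Matrix.cons_val_fin_one, Matrix.head_fin_const,
    Matrix.cons_val_two, Matrix.tail_cons]
  rw [E1, E3, E4, E5]
  ring
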